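/- (Spectral correspondence between the adjacency matrix and the bipartite Coxeter element.) Let Γ be a finite bipartite simple graph with parts O and E and adjacency matrix I. For κ ∈ ℂ, κ is an eigenvalue of I acting on ℂ^V if and only if there exists λ ∈ ℂ, λ ≠ 0, with κ = λ + λ^{−1} such that λ² is an eigenvalue of the linear map s_O ∘ s_E on ℂ^V. -/

import Mathlib

open Finset

/-- The reflection `s_a` on `ℂ^V` attached to a vertex `a` of a simple graph `G`:
it sends the basis vector `e_a` to `−e_a` and `e_b` to `e_b + I_{ab}·e_a` for `b ≠ a`,
where `I` is the adjacency matrix.  In coordinates, `(s_a v)_c = v_c` for `c ≠ a` and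
`(s_a v)_a = (∑_b I_{ab} v_b) − v_a`. -/
noncomputable def sRef {V : Type*} [Fintype V] [DecidableEq V]
    (G : SimpleGraph V) [DecidableRel G.Adj] (a : V) (v : V → ℂ) : V → ℂ :=
  fun c => if c = a then (∑ b, if G.Adj a b then v b else 0) - v a else v c

/-- The composition `s_{a₁} ∘ s_{a₂} ∘ … ∘ s_{aₙ}` of reflections along a list
`L = [a₁, …, aₙ]` of vertices (the reflection at the last entry is applied first). -/
noncomputable def compList {V : Type*} [Fintype V] [DecidableEq V]
    (G : SimpleGraph V) [DecidableRel G.Adj] (L : List V) (v : V → ℂ) : V → ℂ :=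
  L.foldr (fun a w => sRef G a w) v

/-- **Spectral correspondence between the adjacency matrix and the bipartite
Coxeter element.**  Let `Γ` be a finite bipartite simple graph with parts `O` and `E` and
adjacency matrix `I`.  For `κ ∈ ℂ`, `κ` is an eigenvalue of `I` acting on `ℂ^V` if and
only if there exists `t ∈ ℂ`, `t ≠ 0`, with `κ = t + t⁻¹` such that `t²` is an eigenvalue
of the linear map `s_O ∘ s_E` on `ℂ^V` (with `s_O`, `s_E` the compositions of the
reflections over `O` resp. `E`, well defined since reflections at non-adjacent vertices
commute). -/
lemma compList_apply {V : Type*} [Fintype V] [DecidableEq V]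
    (G : SimpleGraph V) [DecidableRel G.Adj] (L : List V) (hnd : L.Nodup)
    (hna : ∀ a ∈ L, ∀ b, G.Adj a b → b ∉ L) (v : V → ℂ) : ∀ (c : V),
    compList G L v c =
      if c ∈ L then (∑ b, if G.Adj c b then v b else 0) - v c else v c := by
  induction L with
  | nil => simp [compList]
  | cons a L ih =>
    have hnd' : L.Nodup := hnd.of_cons
    have hna' : ∀ x ∈ L, ∀ b, G.Adj x b → b ∉ L := fun x hx b hb hbL =>
      hna x (List.mem_cons_of_mem _ hx) b hb (List.mem_cons_of_mem _ hbL)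
    have key : compList G (a :: L) v = sRef G a (compList G L v) := rfl
    intro c
    rw [key]
    unfold sRef
    by_cases hc : c = a
    · subst hc
      rw [if_pos rfl, if_pos List.mem_cons_self]
      have h1 : compList G L v c = v c := by
        rw [ih hnd' hna', if_neg (List.nodup_cons.mp hnd).1]
      have h2 : ∀ b, G.Adj c b → compList G L v b = v b := fun b hb => by
        rw [ih hnd' hna', if_neg
          (fun hbL => hna c List.mem_cons_self b hb (List.mem_cons_of_mem _ hbL))]
      rw [h1]
      congr 1
      refine Finset.sum_congr rfl fun b _ => ?_
      by_cases hab : G.Adj c b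
      · rw [if_pos hab, if_pos hab, h2 b hab]
      · rw [if_neg hab, if_neg hab]
    · rw [if_neg hc, ih hnd' hna']
      have hmem : (c ∈ a :: L) ↔ c ∈ L := by simp [List.mem_cons, hc]
      by_cases hcL : c ∈ L
      · rw [if_pos hcL, if_pos (hmem.mpr hcL)]
      · rw [if_neg hcL, if_neg (fun h => hcL (hmem.mp h))]

theorem adjacency_coxeter_spectral_correspondence {V : Type*} [Fintype V] [DecidableEq V]
    (G : SimpleGraph V) [DecidableRel G.Adj]
    (O E : Finset V) (hdisj : Disjoint O E) (hcover : ∀ v : V, v ∈ O ∨ v ∈ E)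
    (hbip : ∀ a b : V, G.Adj a b → (a ∈ O ∧ b ∈ E) ∨ (a ∈ E ∧ b ∈ O))
    (LO LE : List V) (hLOnd : LO.Nodup) (hLEnd : LE.Nodup)
    (hLO : ∀ x : V, x ∈ LO ↔ x ∈ O) (hLE : ∀ x : V, x ∈ LE ↔ x ∈ E)
    (κ : ℂ) :
    (∃ v : V → ℂ, v ≠ 0 ∧ ∀ a : V, (∑ b, if G.Adj a b then v b else 0) = κ * v a) ↔
    (∃ t : ℂ, t ≠ 0 ∧ κ = t + t⁻¹ ∧
      ∃ v : V → ℂ, v ≠ 0 ∧ compList G LO (compList G LE v) = fun a => t ^ 2 * v a) := by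
  have hOE : ∀ x ∈ O, x ∉ E := fun x hx => Finset.disjoint_left.mp hdisj hx
  have hEO : ∀ x ∈ E, x ∉ O := fun x hx => Finset.disjoint_right.mp hdisj hx
  have hadjOE : ∀ a ∈ O, ∀ c, G.Adj a c → c ∈ E := by
    intro a ha c hac
    rcases hbip a c hac with ⟨_, h⟩ | ⟨h, _⟩
    · exact h
    · exact absurd ha (hEO a h)
  have hadjEO : ∀ a ∈ E, ∀ c, G.Adj a c → c ∈ O := by
    intro a ha c hac
    rcases hbip a c hac with ⟨h, _⟩ | ⟨_, h⟩
    · exact absurd ha (hOE a h)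
    · exact h
  have hnaO : ∀ a ∈ LO, ∀ b, G.Adj a b → b ∉ LO := fun a ha b hab hb =>
    hOE b ((hLO b).mp hb) (hadjOE a ((hLO a).mp ha) b hab)
  have hnaE : ∀ a ∈ LE, ∀ b, G.Adj a b → b ∉ LE := fun a ha b hab hb =>
    hEO b ((hLE b).mp hb) (hadjEO a ((hLE a).mp ha) b hab)
  constructor
  · rintro ⟨v, hv0, hvκ⟩
    obtain ⟨z, hz⟩ : ∃ z : ℂ, z ^ 2 = κ ^ 2 - 4 :=
      IsAlgClosed.exists_pow_nat_eq (κ ^ 2 - 4) zero_lt_two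
    set t : ℂ := (κ + z) / 2 with htdef
    have ht2 : t ^ 2 - κ * t + 1 = 0 := by
      have expand : t ^ 2 - κ * t + 1 = (z ^ 2 - (κ ^ 2 - 4)) / 4 := by
        rw [htdef]; ring
      rw [expand, hz]; ring
    have ht0 : t ≠ 0 := by
      intro h; rw [h] at ht2; norm_num at ht2
    have hκt : κ * t = t ^ 2 + 1 := by linear_combination -ht2
    have hκeq : κ = t + t⁻¹ := by
      have hinv : t⁻¹ = κ - t :=
        inv_eq_of_mul_eq_one_right (by linear_combination -ht2)
      rw [hinv]; ring
    set w : V → ℂ := fun a => if a ∈ O then t * v a else v a with hw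
    refine ⟨t, ht0, hκeq, w, ?_, ?_⟩
    · intro h
      apply hv0
      funext a
      have ha := congrFun h a
      simp only [hw, Pi.zero_apply] at ha
      by_cases haO : a ∈ O
      · rw [if_pos haO] at ha
        exact (mul_eq_zero.mp ha).resolve_left ht0
      · rwa [if_neg haO] at ha
    · have hwE : ∀ b, compList G LE w b = if b ∈ E then t ^ 2 * v b else t * v b := by
        intro b
        rw [compList_apply G LE hLEnd hnaE w b]
        by_cases hb : b ∈ E
        · rw [if_pos ((hLE b).mpr hb), if_pos hb]
          have hsum : (∑ c, if G.Adj b c then w c else 0)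
              = t * ∑ c, if G.Adj b c then v c else 0 := by
            rw [Finset.mul_sum]
            refine Finset.sum_congr rfl fun c _ => ?_
            by_cases hbc : G.Adj b c
            · rw [if_pos hbc, if_pos hbc]
              simp only [hw]
              rw [if_pos (hadjEO b hb c hbc)]
            · rw [if_neg hbc, if_neg hbc, mul_zero]
          have hwb : w b = v b := by simp only [hw]; rw [if_neg (hEO b hb)]
          rw [hsum, hvκ b, hwb]
          linear_combination v b * hκt
        · rw [if_neg (fun hbL => hb ((hLE b).mp hbL)), if_neg hb]
          have hbO : b ∈ O := (hcover b).resolve_right hb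
          simp only [hw]; rw [if_pos hbO]
      funext a
      rw [compList_apply G LO hLOnd hnaO _ a]
      by_cases ha : a ∈ O
      · rw [if_pos ((hLO a).mpr ha)]
        have hsum : (∑ c, if G.Adj a c then compList G LE w c else 0)
            = t ^ 2 * ∑ c, if G.Adj a c then v c else 0 := by
          rw [Finset.mul_sum]
          refine Finset.sum_congr rfl fun c _ => ?_
          by_cases hac : G.Adj a c
          · rw [if_pos hac, if_pos hac, hwE c, if_pos (hadjOE a ha c hac)]
          · rw [if_neg hac, if_neg hac, mul_zero]
        have hwa : w a = t * v a := by simp only [hw]; rw [if_pos ha]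
        rw [hsum, hvκ a, hwE a, if_neg (hOE a ha), hwa]
        linear_combination t * v a * hκt
      · rw [if_neg (fun h => ha ((hLO a).mp h)), hwE a]
        have haE : a ∈ E := (hcover a).resolve_left ha
        have hwa : w a = v a := by simp only [hw]; rw [if_neg ha]
        rw [if_pos haE, hwa]
  · rintro ⟨t, ht0, hκ, w, hw0, heig⟩
    have hκt : κ * t = t ^ 2 + 1 := by
      rw [hκ, add_mul, inv_mul_cancel₀ ht0]; ring
    have ht2 : t ^ 2 - κ * t + 1 = 0 := by linear_combination -hκt
    have hE : ∀ b ∈ E, (∑ c, if G.Adj b c then w c else 0) = κ * t * w b := by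
      intro b hb
      have h := congrFun heig b
      rw [compList_apply G LO hLOnd hnaO, if_neg (fun h' => hEO b hb ((hLO b).mp h')),
        compList_apply G LE hLEnd hnaE, if_pos ((hLE b).mpr hb)] at h
      linear_combination h + w b * ht2
    have hO : ∀ a ∈ O, t * (∑ c, if G.Adj a c then w c else 0) = κ * w a := by
      intro a ha
      have h := congrFun heig a
      rw [compList_apply G LO hLOnd hnaO, if_pos ((hLO a).mpr ha)] at h
      have h1 : compList G LE w a = w a := by
        rw [compList_apply G LE hLEnd hnaE, if_neg (fun h' => hOE a ha ((hLE a).mp h'))]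
      have h2 : (∑ c, if G.Adj a c then compList G LE w c else 0)
          = (κ * t - 1) * (∑ c, if G.Adj a c then w c else 0) := by
        rw [Finset.mul_sum]
        refine Finset.sum_congr rfl fun c _ => ?_
        by_cases hac : G.Adj a c
        · rw [if_pos hac, if_pos hac]
          have hcE : c ∈ E := hadjOE a ha c hac
          rw [compList_apply G LE hLEnd hnaE, if_pos ((hLE c).mpr hcE), hE c hcE]
          ring
        · rw [if_neg hac, if_neg hac, mul_zero]
      rw [h1, h2] at h
      have key : t * (t * (∑ c, if G.Adj a c then w c else 0) - κ * w a) = 0 := by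
        linear_combination h + ((∑ c, if G.Adj a c then w c else 0) + w a) * ht2
      exact sub_eq_zero.mp ((mul_eq_zero.mp key).resolve_left ht0)
    refine ⟨fun a => if a ∈ E then t * w a else w a, ?_, ?_⟩
    · intro h
      apply hw0
      funext a
      have ha := congrFun h a
      simp only [Pi.zero_apply] at ha
      by_cases haE : a ∈ E
      · rw [if_pos haE] at ha
        exact (mul_eq_zero.mp ha).resolve_left ht0
      · rwa [if_neg haE] at ha
    · intro a
      by_cases haE : a ∈ E
      · have hsum : (∑ c, if G.Adj a c then (if c ∈ E then t * w c else w c) else 0)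
            = ∑ c, if G.Adj a c then w c else 0 := by
          refine Finset.sum_congr rfl fun c _ => ?_
          by_cases hac : G.Adj a c
          · rw [if_pos hac, if_pos hac, if_neg (hOE c (hadjEO a haE c hac))]
          · rw [if_neg hac, if_neg hac]
        show _ = κ * (if a ∈ E then t * w a else w a)
        rw [hsum, hE a haE, if_pos haE]
        ring
      · have haO : a ∈ O := (hcover a).resolve_right haE
        have hsum : (∑ c, if G.Adj a c then (if c ∈ E then t * w c else w c) else 0)
            = t * ∑ c, if G.Adj a c then w c else 0 := by
          rw [Finset.mul_sum]
          refine Finset.sum_congr rfl fun c _ => ?_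
          by_cases hac : G.Adj a c
          · rw [if_pos hac, if_pos hac, if_pos (hadjOE a haO c hac)]
          · rw [if_neg hac, if_neg hac, mul_zero]
        show _ = κ * (if a ∈ E then t * w a else w a)
        rw [hsum, hO a haO, if_neg haE]
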